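/- In the KwikCluster algorithm, an edge (u,v) is in disagreement with the output clustering if and only if there exists a bad triangle T = (u,v,w) such that w or one of u,v was chosen as pivot at a step when all three of u,v,w were still active; moreover each mistake is charged to a unique bad triangle. -/
import Mathlib


variable {V : Type*} [Fintype V] [DecidableEq V]

/-- Active vertices of KwikCluster run with pivot sequence `p` : at step `t` the cluster of
the pivot `p t` (the pivot together with its active positive neighbours) is removed. -/
def kwikActive (pos : V → V → Bool) (p : ℕ → V) : ℕ → Finset V
  | 0 => Finset.univ
  | t + 1 =>
      kwikActive pos p t \
        (kwikActive pos p t).filter (fun v => v = p t ∨ pos (p t) v = true)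

/-- The cluster produced by KwikCluster at step `t`. -/
def kwikCluster (pos : V → V → Bool) (p : ℕ → V) (t : ℕ) : Finset V :=
  (kwikActive pos p t).filter (fun v => v = p t ∨ pos (p t) v = true)

/-- `(u,v)` is in disagreement with the output clustering of KwikCluster: a positive edge
disagrees if exactly one endpoint is in the cluster of some step, a negative edge disagrees
if both endpoints are in the cluster of some step. -/
def kwikMistake (pos : V → V → Bool) (p : ℕ → V) (u v : V) : Prop :=
  if pos u v = true then
    ∃ t, (u ∈ kwikCluster pos p t ∧ v ∉ kwikCluster pos p t) ∨
         (u ∉ kwikCluster pos p t ∧ v ∈ kwikCluster pos p t)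
  else
    ∃ t, u ∈ kwikCluster pos p t ∧ v ∈ kwikCluster pos p t

/-- `(u,v,w)` is a bad triangle: distinct vertices, two positive edges, one negative edge. -/
def BadTriple (pos : V → V → Bool) (u v w : V) : Prop :=
  u ≠ v ∧ u ≠ w ∧ v ≠ w ∧
    ((pos u v ∧ pos u w ∧ ¬ pos v w) ∨ (pos u v ∧ ¬ pos u w ∧ pos v w) ∨
      (¬ pos u v ∧ pos u w ∧ pos v w))

lemma kwikActive_succ_subset (pos : V → V → Bool) (p : ℕ → V) (t : ℕ) :
    kwikActive pos p (t + 1) ⊆ kwikActive pos p t := by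
  rw [kwikActive]
  exact Finset.sdiff_subset

lemma kwikActive_antitone (pos : V → V → Bool) (p : ℕ → V) {s t : ℕ} (h : s ≤ t) :
    kwikActive pos p t ⊆ kwikActive pos p s := by
  induction h with
  | refl => exact Finset.Subset.refl _
  | step _ ih => exact (kwikActive_succ_subset pos p _).trans ih

lemma mem_kwikCluster {pos : V → V → Bool} {p : ℕ → V} {t : ℕ} {u : V} :
    u ∈ kwikCluster pos p t ↔
      u ∈ kwikActive pos p t ∧ (u = p t ∨ pos (p t) u = true) := by
  simp [kwikCluster]

lemma not_active_succ {pos : V → V → Bool} {p : ℕ → V} {t : ℕ} {u : V}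
    (h : u ∈ kwikCluster pos p t) : u ∉ kwikActive pos p (t + 1) := by
  intro hmem
  rw [kwikActive, Finset.mem_sdiff] at hmem
  exact hmem.2 h

lemma kwikCluster_unique {pos : V → V → Bool} {p : ℕ → V} {s t : ℕ} {u : V}
    (hs : u ∈ kwikCluster pos p s) (ht : u ∈ kwikCluster pos p t) : s = t := by
  by_contra h
  rcases Nat.lt_or_ge s t with h' | h'
  · exact not_active_succ hs (kwikActive_antitone pos p h' (mem_kwikCluster.mp ht).1)
  · have h'' : t < s := lt_of_le_of_ne h' (fun he => h he.symm)
    exact not_active_succ ht (kwikActive_antitone pos p h'' (mem_kwikCluster.mp hs).1)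

lemma mem_active_iff_le {pos : V → V → Bool} {p : ℕ → V} {s : ℕ} {u : V}
    (hs : u ∈ kwikCluster pos p s) (t : ℕ) :
    u ∈ kwikActive pos p t ↔ t ≤ s := by
  constructor
  · intro h
    by_contra hlt
    push_neg at hlt
    exact not_active_succ hs (kwikActive_antitone pos p hlt h)
  · intro h
    exact kwikActive_antitone pos p h (mem_kwikCluster.mp hs).1

lemma exists_kwikCluster (pos : V → V → Bool) (p : ℕ → V)
    (hp : ∀ t, (kwikActive pos p t).Nonempty → p t ∈ kwikActive pos p t) (u : V) :
    ∃ t, u ∈ kwikCluster pos p t := by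
  have hend : ∃ t, u ∉ kwikActive pos p t := by
    by_contra h
    push_neg at h
    have hdec : ∀ t, (kwikActive pos p (t + 1)).card < (kwikActive pos p t).card := by
      intro t
      have hpt : p t ∈ kwikActive pos p t := hp t ⟨u, h t⟩
      have hptc : p t ∈ kwikCluster pos p t := mem_kwikCluster.mpr ⟨hpt, Or.inl rfl⟩
      exact Finset.card_lt_card
        ((Finset.ssubset_iff_of_subset (kwikActive_succ_subset pos p t)).mpr
          ⟨p t, hpt, not_active_succ hptc⟩)
    have hbound : ∀ t, (kwikActive pos p t).card + t ≤ (kwikActive pos p 0).card := by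
      intro t
      induction t with
      | zero => simp
      | succ n ih => have := hdec n; omega
    have := hbound ((kwikActive pos p 0).card + 1)
    omega
  classical
  set t := Nat.find hend with ht
  have htpos : t ≠ 0 := by
    intro h0
    have := Nat.find_spec hend
    rw [← ht, h0] at this
    exact this (by simp [kwikActive])
  obtain ⟨n, hn⟩ := Nat.exists_eq_succ_of_ne_zero htpos
  refine ⟨n, ?_⟩
  have h1 : u ∈ kwikActive pos p n := by
    by_contra h
    exact absurd h (by simpa using Nat.find_min hend (by omega : n < t))
  have h2 : u ∉ kwikActive pos p (n + 1) := by
    have hs := Nat.find_spec hend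
    rw [← ht, hn] at hs
    exact hs
  rw [kwikActive, Finset.mem_sdiff] at h2
  push_neg at h2
  exact h2 h1

omit [Fintype V] [DecidableEq V] in
lemma badTriple_comm {pos : V → V → Bool} (hsym : ∀ u v, pos u v = pos v u) {u v w : V} :
    BadTriple pos u v w ↔ BadTriple pos v u w := by
  unfold BadTriple
  rw [hsym v u]
  constructor
  · rintro ⟨h1, h2, h3, h4⟩
    exact ⟨h1.symm, h3, h2, by tauto⟩
  · rintro ⟨h1, h2, h3, h4⟩
    exact ⟨h1.symm, h3, h2, by tauto⟩

/-- The charging lemma in the positive-edge case, with `tu < tv`. -/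
lemma kwik_pos_case (pos : V → V → Bool)
    (hsym : ∀ u v, pos u v = pos v u) (p : ℕ → V)
    (hp : ∀ t, (kwikActive pos p t).Nonempty → p t ∈ kwikActive pos p t)
    (u v : V) (huv : u ≠ v) (hpos : pos u v = true)
    {tu tv : ℕ} (htu : u ∈ kwikCluster pos p tu) (htv : v ∈ kwikCluster pos p tv)
    (hlt : tu < tv) :
    ∃! w, BadTriple pos u v w ∧
      ∃ t, u ∈ kwikActive pos p t ∧ v ∈ kwikActive pos p t ∧
        w ∈ kwikActive pos p t ∧ p t = w := by
  have huA : u ∈ kwikActive pos p tu := (mem_kwikCluster.mp htu).1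
  have hvA : v ∈ kwikActive pos p tu := (mem_active_iff_le htv tu).mpr hlt.le
  have hwA : p tu ∈ kwikActive pos p tu := hp tu ⟨u, huA⟩
  have hvnot : v ∉ kwikCluster pos p tu := by
    intro h
    exact absurd (kwikCluster_unique h htv) hlt.ne
  have hvcond : ¬(v = p tu ∨ pos (p tu) v = true) := by
    intro hc
    exact hvnot (mem_kwikCluster.mpr ⟨hvA, hc⟩)
  push_neg at hvcond
  obtain ⟨hne_vw, hnpos⟩ := hvcond
  have hne_uw : u ≠ p tu := by
    intro h
    exact hnpos (h ▸ hpos)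
  have hposwu : pos (p tu) u = true := by
    rcases (mem_kwikCluster.mp htu).2 with h | h
    · exact absurd h hne_uw
    · exact h
  refine ⟨p tu, ⟨⟨huv, hne_uw, hne_vw, Or.inl ⟨hpos, (hsym u (p tu)).trans hposwu,
    fun h => hnpos ((hsym (p tu) v).trans h)⟩⟩, tu, huA, hvA, hwA, rfl⟩, ?_⟩
  rintro w' ⟨⟨_, hne_uw', hne_vw', hpat'⟩, t', hu', hv', hw', hpt'⟩
  subst hpt'
  have ht'u : t' ≤ tu := (mem_active_iff_le htu t').mp hu'
  have ht'v : t' ≤ tv := (mem_active_iff_le htv t').mp hv'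
  rcases hpat' with ⟨_, h2, _⟩ | ⟨_, _, h3⟩ | ⟨h1, _, _⟩
  · have huc : u ∈ kwikCluster pos p t' :=
      mem_kwikCluster.mpr ⟨hu', Or.inr ((hsym (p t') u).trans h2)⟩
    exact congrArg p (kwikCluster_unique huc htu)
  · have hvc : v ∈ kwikCluster pos p t' :=
      mem_kwikCluster.mpr ⟨hv', Or.inr ((hsym (p t') v).trans h3)⟩
    have := kwikCluster_unique hvc htv
    omega
  · exact absurd hpos h1

/-- The charging lemma in the negative-edge case. -/
lemma kwik_neg_case (pos : V → V → Bool)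
    (hsym : ∀ u v, pos u v = pos v u) (p : ℕ → V)
    (hp : ∀ t, (kwikActive pos p t).Nonempty → p t ∈ kwikActive pos p t)
    (u v : V) (huv : u ≠ v) (hpos : pos u v = false)
    {t : ℕ} (hu : u ∈ kwikCluster pos p t) (hv : v ∈ kwikCluster pos p t) :
    ∃! w, BadTriple pos u v w ∧
      ∃ t, u ∈ kwikActive pos p t ∧ v ∈ kwikActive pos p t ∧
        w ∈ kwikActive pos p t ∧ p t = w := by
  have huA : u ∈ kwikActive pos p t := (mem_kwikCluster.mp hu).1
  have hvA : v ∈ kwikActive pos p t := (mem_kwikCluster.mp hv).1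
  have hwA : p t ∈ kwikActive pos p t := hp t ⟨u, huA⟩
  have hne_uw : u ≠ p t := by
    intro h
    rcases (mem_kwikCluster.mp hv).2 with h' | h'
    · exact huv (h.trans h'.symm)
    · rw [← h] at h'
      rw [hpos] at h'
      exact Bool.noConfusion h'
  have hne_vw : v ≠ p t := by
    intro h
    rcases (mem_kwikCluster.mp hu).2 with h' | h'
    · exact huv (h'.trans h.symm)
    · rw [← h] at h'
      rw [hsym v u, hpos] at h'
      exact Bool.noConfusion h'
  have hposwu : pos (p t) u = true := by
    rcases (mem_kwikCluster.mp hu).2 with h | h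
    · exact absurd h hne_uw
    · exact h
  have hposwv : pos (p t) v = true := by
    rcases (mem_kwikCluster.mp hv).2 with h | h
    · exact absurd h hne_vw
    · exact h
  refine ⟨p t, ⟨⟨huv, hne_uw, hne_vw, Or.inr (Or.inr
    ⟨by simp [hpos], (hsym u (p t)).trans hposwu, (hsym v (p t)).trans hposwv⟩)⟩,
    t, huA, hvA, hwA, rfl⟩, ?_⟩
  rintro w' ⟨⟨_, hne_uw', hne_vw', hpat'⟩, t', hu', hv', hw', hpt'⟩
  subst hpt'
  rcases hpat' with ⟨h1, _, _⟩ | ⟨h1, _, _⟩ | ⟨_, h2, h3⟩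
  · rw [hpos] at h1; exact Bool.noConfusion h1
  · rw [hpos] at h1; exact Bool.noConfusion h1
  · have huc : u ∈ kwikCluster pos p t' :=
      mem_kwikCluster.mpr ⟨hu', Or.inr ((hsym (p t') u).trans h2)⟩
    exact congrArg p (kwikCluster_unique huc hu)

/-- An edge `(u,v)` is in disagreement with the KwikCluster output iff there is a bad triangle
`(u,v,w)` whose third vertex `w` is chosen as pivot at a step when all three of `u,v,w` are
still active; moreover each mistake is charged to a unique such bad triangle. -/
theorem kwik_mistake_iff_bad_triangle (pos : V → V → Bool)
    (hsym : ∀ u v, pos u v = pos v u) (p : ℕ → V)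
    (hp : ∀ t, (kwikActive pos p t).Nonempty → p t ∈ kwikActive pos p t)
    (u v : V) (huv : u ≠ v) :
    (kwikMistake pos p u v ↔
      ∃ w, BadTriple pos u v w ∧
        ∃ t, u ∈ kwikActive pos p t ∧ v ∈ kwikActive pos p t ∧
          w ∈ kwikActive pos p t ∧ p t = w) ∧
    (kwikMistake pos p u v →
      ∃! w, BadTriple pos u v w ∧
        ∃ t, u ∈ kwikActive pos p t ∧ v ∈ kwikActive pos p t ∧
          w ∈ kwikActive pos p t ∧ p t = w) := by
  obtain ⟨tu, htu⟩ := exists_kwikCluster pos p hp u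
  obtain ⟨tv, htv⟩ := exists_kwikCluster pos p hp v
  have main : kwikMistake pos p u v →
      ∃! w, BadTriple pos u v w ∧
        ∃ t, u ∈ kwikActive pos p t ∧ v ∈ kwikActive pos p t ∧
          w ∈ kwikActive pos p t ∧ p t = w := by
    intro hm
    unfold kwikMistake at hm
    by_cases hpos : pos u v = true
    · rw [if_pos hpos] at hm
      obtain ⟨t, ht⟩ := hm
      have hne : tu ≠ tv := by
        rcases ht with ⟨h1, h2⟩ | ⟨h1, h2⟩
        · have he : t = tu := kwikCluster_unique h1 htu
          intro heq
          exact h2 (by rw [he, heq]; exact htv)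
        · have he : t = tv := kwikCluster_unique h2 htv
          intro heq
          exact h1 (by rw [he, ← heq]; exact htu)
      rcases lt_or_gt_of_ne hne with hlt | hlt
      · exact kwik_pos_case pos hsym p hp u v huv hpos htu htv hlt
      · have h' := kwik_pos_case pos hsym p hp v u huv.symm
          ((hsym v u).trans hpos) htv htu hlt
        obtain ⟨w, ⟨hbt, t0, h1, h2, h3, h4⟩, huniq⟩ := h'
        refine ⟨w, ⟨(badTriple_comm hsym).mpr hbt, t0, h2, h1, h3, h4⟩, ?_⟩
        rintro w' ⟨hbt', t', a1, a2, a3, a4⟩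
        exact huniq w' ⟨(badTriple_comm hsym).mp hbt', t', a2, a1, a3, a4⟩
    · rw [if_neg hpos] at hm
      obtain ⟨t, h1, h2⟩ := hm
      exact kwik_neg_case pos hsym p hp u v huv (Bool.eq_false_iff.mpr hpos) h1 h2
  have backward : (∃ w, BadTriple pos u v w ∧
      ∃ t, u ∈ kwikActive pos p t ∧ v ∈ kwikActive pos p t ∧
        w ∈ kwikActive pos p t ∧ p t = w) → kwikMistake pos p u v := by
    rintro ⟨w, ⟨_, hne_uw, hne_vw, hpat⟩, t, hu, hv, hw, hpt⟩
    subst hpt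
    unfold kwikMistake
    rcases hpat with ⟨h1, h2, h3⟩ | ⟨h1, h2, h3⟩ | ⟨h1, h2, h3⟩
    · rw [if_pos h1]
      refine ⟨t, Or.inl ⟨mem_kwikCluster.mpr ⟨hu, Or.inr ((hsym (p t) u).trans h2)⟩, ?_⟩⟩
      intro hc
      rcases (mem_kwikCluster.mp hc).2 with h | h
      · exact hne_vw h
      · exact h3 ((hsym v (p t)).trans h)
    · rw [if_pos h1]
      refine ⟨t, Or.inr ⟨?_, mem_kwikCluster.mpr ⟨hv, Or.inr ((hsym (p t) v).trans h3)⟩⟩⟩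
      intro hc
      rcases (mem_kwikCluster.mp hc).2 with h | h
      · exact hne_uw h
      · exact h2 ((hsym u (p t)).trans h)
    · rw [if_neg h1]
      exact ⟨t, mem_kwikCluster.mpr ⟨hu, Or.inr ((hsym (p t) u).trans h2)⟩,
        mem_kwikCluster.mpr ⟨hv, Or.inr ((hsym (p t) v).trans h3)⟩⟩
  exact ⟨⟨fun hm => (main hm).exists, backward⟩, main⟩
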